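/- For real k with 0 ≤ k < 1, K(k) − E(k) = (k²/3) R_D(0, 1−k², 1), where K(k) = ∫₀^{π/2} (1−k² sin²θ)^{-1/2} dθ and E(k) = ∫₀^{π/2} (1−k² sin²θ)^{1/2} dθ. -/

import Mathlib

open MeasureTheory Real

noncomputable def RC (x y : ℝ) : ℝ :=
  (1/2) * ∫ t in Set.Ioi (0:ℝ), (Real.sqrt (t + x))⁻¹ * (t + y)⁻¹

noncomputable def RF (x y z : ℝ) : ℝ :=
  (1/2) * ∫ t in Set.Ioi (0:ℝ), (Real.sqrt ((t + x) * (t + y) * (t + z)))⁻¹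

noncomputable def RD (x y z : ℝ) : ℝ :=
  (3/2) * ∫ t in Set.Ioi (0:ℝ),
    (Real.sqrt ((t + x) * (t + y)))⁻¹ * ((t + z) * Real.sqrt (t + z))⁻¹

noncomputable def RJ (x y z p : ℝ) : ℝ :=
  (3/2) * ∫ t in Set.Ioi (0:ℝ),
    (Real.sqrt ((t + x) * (t + y) * (t + z)))⁻¹ * (t + p)⁻¹

noncomputable def RG (x y z : ℝ) : ℝ :=
  (1/4) * ∫ t in Set.Ioi (0:ℝ),
    (Real.sqrt ((t + x) * (t + y) * (t + z)))⁻¹ *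
      (x / (t + x) + y / (t + y) + z / (t + z)) * t

theorem stmt18 (k : ℝ) (hk0 : 0 ≤ k) (hk1 : k < 1) :
    (∫ θ in (0:ℝ)..(Real.pi / 2), (Real.sqrt (1 - k ^ 2 * Real.sin θ ^ 2))⁻¹)
      - ∫ θ in (0:ℝ)..(Real.pi / 2), Real.sqrt (1 - k ^ 2 * Real.sin θ ^ 2) =
      (k ^ 2 / 3) * RD 0 (1 - k ^ 2) 1 := by
  have hπ := Real.pi_pos
  have hk2 : k^2 < 1 := by nlinarith
  have hpos : ∀ θ : ℝ, 0 < 1 - k^2 * Real.sin θ^2 := by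
    intro θ
    nlinarith [Real.sin_sq_le_one θ, sq_nonneg (Real.sin θ), sq_nonneg k,
      sq_nonneg (k * Real.sin θ)]
  -- Step 1: LHS = k^2 * I
  have hcs : Continuous (fun θ : ℝ => Real.sqrt (1 - k^2 * Real.sin θ^2)) := by fun_prop
  have hcsne : ∀ θ : ℝ, Real.sqrt (1 - k^2 * Real.sin θ^2) ≠ 0 := fun θ =>
    (Real.sqrt_pos.2 (hpos θ)).ne'
  have hint1 : IntervalIntegrable (fun θ => (Real.sqrt (1 - k^2 * Real.sin θ^2))⁻¹)
      volume 0 (Real.pi/2) := (hcs.inv₀ hcsne).intervalIntegrable _ _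
  have hint2 : IntervalIntegrable (fun θ => Real.sqrt (1 - k^2 * Real.sin θ^2))
      volume 0 (Real.pi/2) := hcs.intervalIntegrable _ _
  have key1 : (∫ θ in (0:ℝ)..(Real.pi / 2), (Real.sqrt (1 - k ^ 2 * Real.sin θ ^ 2))⁻¹)
      - ∫ θ in (0:ℝ)..(Real.pi / 2), Real.sqrt (1 - k ^ 2 * Real.sin θ ^ 2)
      = k^2 * ∫ θ in (0:ℝ)..(Real.pi / 2),
          Real.sin θ^2 * (Real.sqrt (1 - k^2 * Real.sin θ^2))⁻¹ := by
    rw [← intervalIntegral.integral_const_mul, ← intervalIntegral.integral_sub hint1 hint2]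
    apply intervalIntegral.integral_congr
    intro θ _
    have h := hpos θ
    have hs : 0 < Real.sqrt (1 - k^2*Real.sin θ^2) := Real.sqrt_pos.2 h
    have hs2 : Real.sqrt (1 - k^2*Real.sin θ^2)^2 = 1 - k^2*Real.sin θ^2 := Real.sq_sqrt h.le
    field_simp
    linarith
  -- Step 2: change of variables t = cot^2 θ
  set g : ℝ → ℝ := fun t =>
    (Real.sqrt ((t + 0) * (t + (1 - k ^ 2))))⁻¹ * ((t + 1) * Real.sqrt (t + 1))⁻¹ with hg_def
  set f : ℝ → ℝ := fun θ => Real.cos θ^2 / Real.sin θ^2 with hf_def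
  set f' : ℝ → ℝ := fun θ => -2 * Real.cos θ / Real.sin θ^3 with hf'_def
  have hmem : ∀ θ ∈ Set.Ioo (0:ℝ) (Real.pi/2),
      0 < Real.sin θ ∧ 0 < Real.cos θ := by
    intro θ hθ
    refine ⟨Real.sin_pos_of_pos_of_lt_pi hθ.1 (by linarith [hθ.2]), ?_⟩
    exact Real.cos_pos_of_mem_Ioo ⟨by linarith [hθ.1], hθ.2⟩
  have hderiv : ∀ θ ∈ Set.Ioo (0:ℝ) (Real.pi/2), HasDerivAt f (f' θ) θ := by
    intro θ hθ
    obtain ⟨hσ, hc⟩ := hmem θ hθ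
    have h1 : HasDerivAt (fun x => Real.cos x ^ 2)
        ((2:ℕ) * Real.cos θ ^ 1 * (-Real.sin θ)) θ := (Real.hasDerivAt_cos θ).pow 2
    have h2 : HasDerivAt (fun x => Real.sin x ^ 2)
        ((2:ℕ) * Real.sin θ ^ 1 * Real.cos θ) θ := (Real.hasDerivAt_sin θ).pow 2
    have := h1.div h2 (by positivity)
    convert (show HasDerivAt f _ θ from this) using 1
    have hpyth := Real.sin_sq_add_cos_sq θ
    simp only [hf'_def]
    field_simp
    linear_combination 2 * hpyth
  have hinj : Set.InjOn f (Set.Ioo (0:ℝ) (Real.pi/2)) := by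
    have : StrictAntiOn f (Set.Ioo (0:ℝ) (Real.pi/2)) := by
      intro a ha b hb hab
      obtain ⟨hsa, hca⟩ := hmem a ha
      obtain ⟨hsb, hcb⟩ := hmem b hb
      have h1 : Real.cos b < Real.cos a := Real.strictAntiOn_cos
        ⟨ha.1.le, by linarith [ha.2]⟩ ⟨hb.1.le, by linarith [hb.2]⟩ hab
      have h2 : Real.sin a < Real.sin b := Real.strictMonoOn_sin
        ⟨by linarith [ha.1], ha.2.le⟩ ⟨by linarith [hb.1], hb.2.le⟩ hab
      simp only [hf_def]
      rw [div_lt_div_iff₀ (by positivity) (by positivity)]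
      have hA : Real.cos b ^ 2 < Real.cos a ^ 2 := by nlinarith
      have hB : Real.sin a ^ 2 < Real.sin b ^ 2 := by nlinarith
      nlinarith [mul_lt_mul_of_pos_right hA (by positivity : (0:ℝ) < Real.sin a ^ 2),
        mul_lt_mul_of_pos_left hB (by positivity : (0:ℝ) < Real.cos a ^ 2)]
    exact this.injOn
  have himg : f '' Set.Ioo (0:ℝ) (Real.pi/2) = Set.Ioi (0:ℝ) := by
    apply Set.Subset.antisymm
    · rintro _ ⟨θ, hθ, rfl⟩
      obtain ⟨hσ, hc⟩ := hmem θ hθ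
      have : (0:ℝ) < Real.cos θ^2 / Real.sin θ^2 := by positivity
      simpa [hf_def] using this
    · intro y hy
      have hy' : (0:ℝ) < y := hy
      have hsy : (0:ℝ) < Real.sqrt y := Real.sqrt_pos.2 hy'
      refine ⟨Real.arctan (1/Real.sqrt y), ⟨by rw [← Real.arctan_zero]; exact Real.arctan_strictMono (by positivity),
        Real.arctan_lt_pi_div_two _⟩, ?_⟩
      have hc := Real.cos_arctan_pos (1/Real.sqrt y)
      have hsin : Real.sin (Real.arctan (1/Real.sqrt y))
          = (1/Real.sqrt y) * Real.cos (Real.arctan (1/Real.sqrt y)) := by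
        have := Real.tan_mul_cos (x := Real.arctan (1/Real.sqrt y)) hc.ne'
        rw [Real.tan_arctan] at this
        exact this.symm
      simp only [hf_def]
      rw [hsin]
      have h2 : Real.sqrt y ^ 2 = y := Real.sq_sqrt hy'.le
      field_simp
      exact h2
  have hIoi : (∫ t in Set.Ioi (0:ℝ), g t)
      = ∫ θ in Set.Ioo (0:ℝ) (Real.pi/2), |f' θ| • g (f θ) := by
    rw [← himg]
    exact integral_image_eq_integral_abs_deriv_smul measurableSet_Ioo
      (fun θ hθ => (hderiv θ hθ).hasDerivWithinAt) hinj g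
  have hcongr : ∀ θ ∈ Set.Ioo (0:ℝ) (Real.pi/2),
      |f' θ| • g (f θ) = 2 * (Real.sin θ^2 * (Real.sqrt (1 - k^2 * Real.sin θ^2))⁻¹) := by
    intro θ hθ
    obtain ⟨hσ, hc⟩ := hmem θ hθ
    have hpy : Real.sin θ^2 + Real.cos θ^2 = 1 := Real.sin_sq_add_cos_sq θ
    have hsp := hpos θ
    have hs : 0 < Real.sqrt (1 - k^2*Real.sin θ^2) := Real.sqrt_pos.2 hsp
    have hs2 : Real.sqrt (1 - k^2*Real.sin θ^2)^2 = 1 - k^2*Real.sin θ^2 := Real.sq_sqrt hsp.le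
    have e1 : f θ + 0 = (Real.cos θ / Real.sin θ)^2 := by
      simp only [hf_def]; field_simp
      ring
    have e2 : f θ + (1 - k^2) = (Real.sqrt (1 - k^2*Real.sin θ^2) / Real.sin θ)^2 := by
      simp only [hf_def]
      field_simp
      rw [mul_comm (Real.sin θ ^ 2) (k ^ 2), hs2]
      linarith [hpy]
    have e3 : f θ + 1 = (1 / Real.sin θ)^2 := by
      simp only [hf_def]
      field_simp
      linarith [hpy]
    have s1 : Real.sqrt ((f θ + 0) * (f θ + (1 - k^2)))
        = (Real.cos θ / Real.sin θ) * (Real.sqrt (1 - k^2*Real.sin θ^2) / Real.sin θ) := by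
      rw [e1, e2, ← mul_pow, Real.sqrt_sq (by positivity)]
    have s3 : Real.sqrt (f θ + 1) = 1 / Real.sin θ := by
      rw [e3, Real.sqrt_sq (by positivity)]
    have habs : |f' θ| = 2 * Real.cos θ / Real.sin θ^3 := by
      have : f' θ = -(2 * Real.cos θ / Real.sin θ^3) := by simp only [hf'_def]; ring
      rw [this, abs_neg, abs_of_pos (by positivity)]
    simp only [hg_def, smul_eq_mul]
    rw [s1, s3, e3, habs]
    field_simp
  have hIoo : (∫ θ in Set.Ioo (0:ℝ) (Real.pi/2), |f' θ| • g (f θ))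
      = 2 * ∫ θ in (0:ℝ)..(Real.pi/2),
          Real.sin θ^2 * (Real.sqrt (1 - k^2 * Real.sin θ^2))⁻¹ := by
    rw [MeasureTheory.setIntegral_congr_fun measurableSet_Ioo hcongr,
      intervalIntegral.integral_of_le (by positivity), ← MeasureTheory.integral_Ioc_eq_integral_Ioo,
      ← MeasureTheory.integral_const_mul]
  rw [key1, RD, hIoi, hIoo]
  ring
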